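/- (Optimality principle.) Let X be a finite set, W : X → ℝ>0 fixed, and let lower/upper bounds w̲ ≤ w̄ on X × X be given, with the feasible set 𝒲 of weight functions w satisfying w̲(x,y) ≤ w(x,y) ≤ w̄(x,y) for x ≠ y, w(x,y) = w(y,x), w ≥ 0, and Σ_y w(x,y) = W(x) for all x. Let q, f : X → ℝ, h(x) = q(x)/W(x), ψ(x,y) = (h(x) − h(y))(f(y) − f(x)). Suppose w* ∈ 𝒲 minimizes ⟨q, f⟩¹_w = Σ_x Σ_y q(x)(w(x,y)/W(x))f(y) over 𝒲. Then for every pair x ≠ y with ψ(x,y) > 0 for which the value w̲(x,y) is feasible (i.e., decreasing w*(x,y) and w*(y,x) by d and increasing the loops w*(x,x), w*(y,y) by d stays in 𝒲 for small d > 0), it must hold that w*(x,y) = w̲(x,y). -/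

import Mathlib

open Finset


lemma aux_pt {X : Type*} [DecidableEq X] (wstar : X → X → ℝ) (d : ℝ)
    (x y : X) (hxy : x ≠ y) (a b : X) :
    (if (a, b) = (x, y) ∨ (a, b) = (y, x) then wstar a b - d
      else if (a, b) = (x, x) ∨ (a, b) = (y, y) then wstar a b + d
      else wstar a b)
    = wstar a b + d * ((if a = x then (1:ℝ) else 0) - (if a = y then 1 else 0))
        * ((if b = x then (1:ℝ) else 0) - (if b = y then 1 else 0)) := by
  by_cases hax : a = x <;> by_cases hay : a = y <;>
    by_cases hbx : b = x <;> by_cases hby : b = y <;>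
    simp_all [Prod.mk.injEq] <;> ring

theorem optimality_principle
    {X : Type*} [Fintype X] [DecidableEq X] [Nonempty X]
    (W : X → ℝ) (hW : ∀ x, 0 < W x)
    (lw uw : X → X → ℝ) (hlu : ∀ x y, lw x y ≤ uw x y)
    (Wfeas : Set (X → X → ℝ))
    (hWfeas : Wfeas = {w | (∀ x y, 0 ≤ w x y) ∧ (∀ x y, w x y = w y x) ∧
      (∀ x y, x ≠ y → lw x y ≤ w x y ∧ w x y ≤ uw x y) ∧
      (∀ x, ∑ y, w x y = W x)})
    (q f : X → ℝ)
    (wstar : X → X → ℝ) (hws : wstar ∈ Wfeas)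
    (hmin : ∀ w ∈ Wfeas,
      ∑ x, ∑ y, q x * (wstar x y / W x) * f y ≤ ∑ x, ∑ y, q x * (w x y / W x) * f y)
    (x y : X) (hxy : x ≠ y)
    (hpsi : 0 < (q x / W x - q y / W y) * (f y - f x))
    (hfeas : ∀ d : ℝ, 0 < d → d ≤ wstar x y - lw x y →
      (fun a b =>
        if (a, b) = (x, y) ∨ (a, b) = (y, x) then wstar a b - d
        else if (a, b) = (x, x) ∨ (a, b) = (y, y) then wstar a b + d
        else wstar a b) ∈ Wfeas) :
    wstar x y = lw x y := by
  subst hWfeas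
  obtain ⟨hnn, hsym, hbd, hsum⟩ := hws
  by_contra hne
  have hlt : lw x y < wstar x y := lt_of_le_of_ne (hbd x y hxy).1 (Ne.symm hne)
  have hd0 : 0 < wstar x y - lw x y := by linarith
  have hw' := hfeas _ hd0 le_rfl
  have hle := hmin _ hw'
  have hW0 : ∀ a : X, W a ≠ 0 := fun a => (hW a).ne'
  set d := wstar x y - lw x y with hd
  have key : ∑ a, ∑ b, q a * ((wstar a b
        + d * ((if a = x then (1:ℝ) else 0) - (if a = y then 1 else 0))
          * ((if b = x then (1:ℝ) else 0) - (if b = y then 1 else 0))) / W a) * f b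
      = (∑ a, ∑ b, q a * (wstar a b / W a) * f b)
        + d * ((q x / W x - q y / W y) * (f x - f y)) := by
    have h1 : ∀ a b : X, q a * ((wstar a b
          + d * ((if a = x then (1:ℝ) else 0) - (if a = y then 1 else 0))
            * ((if b = x then (1:ℝ) else 0) - (if b = y then 1 else 0))) / W a) * f b
        = q a * (wstar a b / W a) * f b
          + (q a / W a * ((if a = x then (1:ℝ) else 0) - (if a = y then 1 else 0)))
            * (d * (((if b = x then (1:ℝ) else 0) - (if b = y then 1 else 0)) * f b)) := by
      intro a b
      field_simp
    simp only [h1, Finset.sum_add_distrib]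
    congr 1
    have h2 : ∀ a : X, ∑ b, (q a / W a * ((if a = x then (1:ℝ) else 0) - (if a = y then 1 else 0)))
          * (d * (((if b = x then (1:ℝ) else 0) - (if b = y then 1 else 0)) * f b))
        = (q a / W a * ((if a = x then (1:ℝ) else 0) - (if a = y then 1 else 0)))
          * (d * (∑ b, ((if b = x then (1:ℝ) else 0) - (if b = y then 1 else 0)) * f b)) := by
      intro a; rw [← Finset.mul_sum, ← Finset.mul_sum]
    simp only [h2]
    rw [← Finset.sum_mul]
    have hAx : ∑ a, q a / W a * ((if a = x then (1:ℝ) else 0) - (if a = y then 1 else 0))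
        = q x / W x - q y / W y := by
      simp [mul_sub, mul_ite, mul_one, mul_zero, Finset.sum_sub_distrib]
    have hAf : ∑ b, ((if b = x then (1:ℝ) else 0) - (if b = y then 1 else 0)) * f b
        = f x - f y := by
      simp [sub_mul, ite_mul, one_mul, zero_mul, Finset.sum_sub_distrib]
    rw [hAx, hAf]; ring
  simp only [aux_pt wstar d x y hxy] at hle
  rw [key] at hle
  have h3 : d * ((q x / W x - q y / W y) * (f x - f y))
      = -(d * ((q x / W x - q y / W y) * (f y - f x))) := by ring
  have h4 := mul_pos hd0 hpsi
  linarith
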